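/- Fix 0 < β ≤ log 4 and set K_c^{(2)}(β) := 1/(4βe^{−β}) + 1/(2β). Then: (a) for every 0 < K ≤ K_c^{(2)}(β), E_{β,K} = {ρ_β}; (b) for every K > K_c^{(2)}(β) there exist ν⁺ = ν⁺(β,K) and ν⁻ = ν⁻(β,K) in P with ν⁺ ≠ ν⁻, ν⁺ ≠ ρ_β, ν⁻ ≠ ρ_β, and E_{β,K} = {ν⁺, ν⁻}, where ν⁻ is obtained from ν⁺ by interchanging its components at −1 and at 1 (i.e. ν⁻₋₁ = ν⁺₁, ν⁻₀ = ν⁺₀, ν⁻₁ = ν⁺₋₁); (c) ν⁺ and ν⁻ can be chosen to depend continuously on K ∈ (K_c^{(2)}(β), ∞), and ν⁺ → ρ_β and ν⁻ → ρ_β as K → K_c^{(2)}(β)⁺. -/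

import Mathlib

noncomputable section

/-- `μ = (μ₋₁, μ₀, μ₁)` is a probability vector on `Λ = {-1,0,1}`. -/
def IsProbVec (μ : ℝ × ℝ × ℝ) : Prop :=
  0 ≤ μ.1 ∧ 0 ≤ μ.2.1 ∧ 0 ≤ μ.2.2 ∧ μ.1 + μ.2.1 + μ.2.2 = 1

/-- Relative entropy `R(μ|ρ)` with respect to the uniform measure `ρ = (1/3,1/3,1/3)`
(the convention `0 · log 0 = 0` holds automatically since `Real.log 0 = 0`). -/
def relEntUnif (μ : ℝ × ℝ × ℝ) : ℝ :=
  μ.1 * Real.log (3 * μ.1) + μ.2.1 * Real.log (3 * μ.2.1) + μ.2.2 * Real.log (3 * μ.2.2)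

/-- `f_K(μ) = (μ₁ + μ₋₁) − K (μ₁ − μ₋₁)²`. -/
def fK (K : ℝ) (μ : ℝ × ℝ × ℝ) : ℝ :=
  (μ.2.2 + μ.1) - K * (μ.2.2 - μ.1) ^ 2

/-- The set `E_{β,K}` of canonical equilibrium macrostates: the minimizers of
`R(μ|ρ) + β f_K(μ)` over probability vectors. -/
def canonE (β K : ℝ) : Set (ℝ × ℝ × ℝ) :=
  {μ | IsProbVec μ ∧ ∀ ν, IsProbVec ν →
    relEntUnif μ + β * fK K μ ≤ relEntUnif ν + β * fK K ν}

/-- The measure `ρ_β` with `ρ_β(±1) = e^{−β}/(1+2e^{−β})` and `ρ_β(0) = 1/(1+2e^{−β})`. -/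
def rhoBeta (β : ℝ) : ℝ × ℝ × ℝ :=
  (Real.exp (-β) / (1 + 2 * Real.exp (-β)),
   1 / (1 + 2 * Real.exp (-β)),
   Real.exp (-β) / (1 + 2 * Real.exp (-β)))

/-- The second-order critical value `K_c^{(2)}(β) = 1/(4βe^{−β}) + 1/(2β)`. -/
def Kc2 (β : ℝ) : ℝ := 1 / (4 * β * Real.exp (-β)) + 1 / (2 * β)
noncomputable section
namespace BCaux
open Real

def cB (β : ℝ) : ℝ := Real.exp (-β)
def ZB (β x : ℝ) : ℝ := 1 + cB β * Real.exp x + cB β * Real.exp (-x)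
def muB (β x : ℝ) : ℝ × ℝ × ℝ :=
  (cB β * Real.exp (-x) / ZB β x, 1 / ZB β x, cB β * Real.exp x / ZB β x)
def mfB (β x : ℝ) : ℝ := (cB β * Real.exp x - cB β * Real.exp (-x)) / ZB β x
def hhB (β K x : ℝ) : ℝ := x * mfB β x - Real.log (ZB β x / 3) - β * K * (mfB β x)^2
def qqB (β x : ℝ) : ℝ := x * ZB β x / (4 * β * cB β * Real.sinh x)
def mfdB (β x : ℝ) : ℝ :=
  (cB β * (Real.exp x + Real.exp (-x)) + 4 * cB β ^ 2) / ZB β x ^ 2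

lemma cB_pos (β : ℝ) : 0 < cB β := Real.exp_pos _

lemma ZB_pos (β x : ℝ) : 0 < ZB β x := by
  have h1 := (cB_pos β).le
  have h2 := (Real.exp_pos x).le
  have h3 := (Real.exp_pos (-x)).le
  unfold ZB; nlinarith [mul_nonneg h1 h2, mul_nonneg h1 h3]

lemma ZB_cosh (β x : ℝ) : ZB β x = 1 + 2 * cB β * Real.cosh x := by
  rw [Real.cosh_eq]; unfold ZB; ring

lemma mfB_sinh (β x : ℝ) : mfB β x = 2 * cB β * Real.sinh x / ZB β x := by
  rw [Real.sinh_eq]; unfold mfB; ring_nf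

lemma ZB_even (β x : ℝ) : ZB β (-x) = ZB β x := by unfold ZB; rw [neg_neg]; ring

lemma mfB_odd (β x : ℝ) : mfB β (-x) = - mfB β x := by
  unfold mfB; rw [neg_neg, ZB_even]; ring

lemma hhB_even (β K x : ℝ) : hhB β K (-x) = hhB β K x := by
  unfold hhB; rw [mfB_odd, ZB_even]; ring_nf

lemma mfB_lt_one (β x : ℝ) : mfB β x < 1 := by
  rw [mfB_sinh, div_lt_one (ZB_pos β x), ZB_cosh]
  nlinarith [Real.sinh_lt_cosh x, cB_pos β]

lemma neg_one_lt_mfB (β x : ℝ) : -1 < mfB β x := by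
  have := mfB_lt_one β (-x)
  rw [mfB_odd] at this; linarith

lemma mu_sum (β x : ℝ) : (muB β x).1 + (muB β x).2.1 + (muB β x).2.2 = 1 := by
  have hZ := (ZB_pos β x).ne'
  unfold muB ZB at *
  field_simp
  ring

lemma isProbVec_muB (β x : ℝ) : IsProbVec (muB β x) := by
  have hZ := (ZB_pos β x).le
  have h1 := (cB_pos β).le
  refine ⟨?_, ?_, ?_, mu_sum β x⟩ <;> unfold muB <;> dsimp only <;>
    [exact div_nonneg (mul_nonneg h1 (Real.exp_pos _).le) hZ;
     exact div_nonneg one_pos.le hZ;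
     exact div_nonneg (mul_nonneg h1 (Real.exp_pos _).le) hZ]

lemma muB_zero (β : ℝ) : muB β 0 = rhoBeta β := by
  unfold muB rhoBeta ZB cB
  norm_num
  constructor <;> [skip; constructor] <;> ring_nf

lemma mfB_zero (β : ℝ) : mfB β 0 = 0 := by
  unfold mfB; norm_num

lemma mfB_sub (β x : ℝ) : (muB β x).2.2 - (muB β x).1 = mfB β x := by
  unfold muB mfB; rw [div_sub_div_same]

/-- core entropy inequality term -/
lemma klterm_le (a p : ℝ) (ha : 0 ≤ a) (hp : 0 < p) :
    a - p ≤ a * Real.log a - a * Real.log p := by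
  rcases eq_or_lt_of_le ha with h | h
  · simp [← h]; linarith
  · have ht : 0 < p / a := div_pos hp h
    have := Real.log_le_sub_one_of_pos ht
    rw [Real.log_div hp.ne' h.ne'] at this
    have := mul_le_mul_of_nonneg_left this h.le
    rw [mul_sub] at this
    have hpa : a * (p / a) = p := by field_simp
    nlinarith

lemma klterm_eq (a p : ℝ) (ha : 0 ≤ a) (hp : 0 < p)
    (he : a * Real.log a - a * Real.log p = a - p) : a = p := by
  rcases eq_or_lt_of_le ha with h | h
  · exfalso; rw [← h] at he; simp at he; linarith
  · by_contra hne
    have ht : 0 < p / a := div_pos hp h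
    have htne : p / a ≠ 1 := by
      intro h1
      exact hne (by field_simp at h1; linarith)
    have := Real.log_lt_sub_one_of_pos ht htne
    rw [Real.log_div hp.ne' h.ne'] at this
    have := mul_lt_mul_of_pos_left this h
    rw [mul_sub] at this
    have hpa : a * (p / a) = p := by field_simp
    nlinarith


lemma pos_of_deriv_pos (f f' : ℝ → ℝ) (hd : ∀ x, HasDerivAt f (f' x) x)
    (h0 : f 0 = 0) (hp : ∀ x, 0 < x → 0 < f' x) : ∀ x, 0 < x → 0 < f x := by
  intro x hx
  have hmono : StrictMonoOn f (Set.Ici 0) := by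
    apply strictMonoOn_of_deriv_pos (convex_Ici 0)
    · exact fun y _ => (hd y).differentiableAt.continuousAt.continuousWithinAt
    · intro y hy
      rw [interior_Ici] at hy
      rw [(hd y).deriv]; exact hp y hy
  have := hmono (Set.mem_Ici.2 le_rfl) (Set.mem_Ici.2 hx.le) hx
  rwa [h0] at this

lemma H2 (x : ℝ) (hx : 0 < x) : Real.sinh x < x * Real.cosh x := by
  have := pos_of_deriv_pos (fun y => y * Real.cosh y - Real.sinh y)
    (fun y => y * Real.sinh y)
    (fun y => by
      have h := ((hasDerivAt_id y).mul (Real.hasDerivAt_cosh y)).sub (Real.hasDerivAt_sinh y)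
      refine h.congr_deriv ?_; simp only [id_eq]; ring)
    (by simp) (fun y hy => mul_pos hy (Real.sinh_pos_iff.mpr hy)) x hx
  linarith

lemma H3 (x : ℝ) (hx : 0 < x) : 3 * Real.sinh x < 2 * x + x * Real.cosh x := by
  have h2 : ∀ y, 0 < y → 0 < 2 - 2 * Real.cosh y + y * Real.sinh y := by
    apply pos_of_deriv_pos _ (fun y => y * Real.cosh y - Real.sinh y)
    · intro y
      have h := ((hasDerivAt_const y (2:ℝ)).sub ((hasDerivAt_const y (2:ℝ)).mul (Real.hasDerivAt_cosh y))).add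
        ((hasDerivAt_id y).mul (Real.hasDerivAt_sinh y))
      refine h.congr_deriv ?_; simp only [id_eq]; ring
    · simp
    · intro y hy; linarith [H2 y hy]
  have := pos_of_deriv_pos (fun y => 2 * y + y * Real.cosh y - 3 * Real.sinh y)
    (fun y => 2 - 2 * Real.cosh y + y * Real.sinh y)
    (fun y => by
      have h := (((hasDerivAt_const y (2:ℝ)).mul (hasDerivAt_id y)).add
        ((hasDerivAt_id y).mul (Real.hasDerivAt_cosh y))).sub
        ((hasDerivAt_const y (3:ℝ)).mul (Real.hasDerivAt_sinh y))
      refine h.congr_deriv ?_; simp only [id_eq]; ring)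
    (by simp) h2 x hx
  linarith

lemma H4 (x : ℝ) (hx : 0 < x) :
    0 < Real.sinh x * Real.cosh x - x + 2 * Real.sinh x - 2 * (x * Real.cosh x) := by
  have := pos_of_deriv_pos
    (fun y => Real.sinh y * Real.cosh y - y + 2 * Real.sinh y - 2 * (y * Real.cosh y))
    (fun y => 2 * Real.sinh y * (Real.sinh y - y))
    (fun y => by
      have h := ((((Real.hasDerivAt_sinh y).mul (Real.hasDerivAt_cosh y)).sub (hasDerivAt_id y)).add
        ((hasDerivAt_const y (2:ℝ)).mul (Real.hasDerivAt_sinh y))).sub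
        ((hasDerivAt_const y (2:ℝ)).mul ((hasDerivAt_id y).mul (Real.hasDerivAt_cosh y)))
      refine h.congr_deriv ?_
      have hc := Real.cosh_sq_sub_sinh_sq y
      simp only [id_eq]
      nlinarith [hc])
    (by simp) (fun y hy => by
      have h1 := Real.self_lt_sinh_iff.mpr hy
      have h2 := Real.sinh_pos_iff.mpr hy
      nlinarith) x hx
  linarith

lemma sinh_cosh_gt (x : ℝ) (hx : 0 < x) : x < Real.sinh x * Real.cosh x := by
  have h1 := Real.self_lt_sinh_iff.mpr hx
  have h2 := Real.one_le_cosh x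
  nlinarith [Real.sinh_pos_iff.mpr hx]

lemma exp_mul_exp_neg (x : ℝ) : Real.exp x * Real.exp (-x) = 1 := by
  rw [← Real.exp_add]; simp

lemma cB_ge (β : ℝ) (hβ : β ≤ Real.log 4) : 1/4 ≤ cB β := by
  have h4 : Real.exp (Real.log 4) = 4 := Real.exp_log (by norm_num)
  have := Real.exp_le_exp.mpr (neg_le_neg hβ)
  rw [Real.exp_neg, h4] at this
  unfold cB; linarith

lemma ZB_deriv_sinh (β x : ℝ) :
    cB β * Real.exp x - cB β * Real.exp (-x) = 2 * cB β * Real.sinh x := by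
  rw [Real.sinh_eq]; ring

lemma hasDerivAt_ZB (β x : ℝ) :
    HasDerivAt (ZB β) (2 * cB β * Real.sinh x) x := by
  have he : HasDerivAt (fun y : ℝ => Real.exp (-y)) (-Real.exp (-x)) x := by
    exact ((Real.hasDerivAt_exp (-x)).comp x (hasDerivAt_neg x)).congr_deriv (by ring)
  have h := ((hasDerivAt_const x (1:ℝ)).add
    ((hasDerivAt_const x (cB β)).mul (Real.hasDerivAt_exp x))).add
    ((hasDerivAt_const x (cB β)).mul he)
  unfold ZB
  refine h.congr_deriv ?_
  rw [← ZB_deriv_sinh]; ring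

lemma hasDerivAt_mfB (β x : ℝ) : HasDerivAt (mfB β) (mfdB β x) x := by
  have hZ := hasDerivAt_ZB β x
  have he : HasDerivAt (fun y : ℝ => Real.exp (-y)) (-Real.exp (-x)) x := by
    exact ((Real.hasDerivAt_exp (-x)).comp x (hasDerivAt_neg x)).congr_deriv (by ring)
  have hn : HasDerivAt (fun y => cB β * Real.exp y - cB β * Real.exp (-y))
      (cB β * Real.exp x + cB β * Real.exp (-x)) x := by
    have h := ((hasDerivAt_const x (cB β)).mul (Real.hasDerivAt_exp x)).sub
      ((hasDerivAt_const x (cB β)).mul he)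
    refine h.congr_deriv ?_; ring
  have h := hn.div hZ (ZB_pos β x).ne'
  have hnum : (cB β * Real.exp x + cB β * Real.exp (-x)) * ZB β x
      - (cB β * Real.exp x - cB β * Real.exp (-x)) * (2 * cB β * Real.sinh x)
      = cB β * (Real.exp x + Real.exp (-x)) + 4 * cB β ^ 2 := by
    rw [← ZB_deriv_sinh]
    have hp := exp_mul_exp_neg x
    unfold ZB
    linear_combination (4 * cB β ^ 2) * hp
  have h2 : mfdB β x = ((cB β * Real.exp x + cB β * Real.exp (-x)) * ZB β x
      - (cB β * Real.exp x - cB β * Real.exp (-x)) * (2 * cB β * Real.sinh x)) / ZB β x ^ 2 := by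
    unfold mfdB; rw [hnum]
  rw [h2]
  unfold mfB
  exact h

lemma mfdB_pos (β x : ℝ) : 0 < mfdB β x := by
  unfold mfdB
  have := cB_pos β
  have := Real.exp_pos x
  have := Real.exp_pos (-x)
  have := ZB_pos β x
  positivity

lemma mfB_strictMono (β : ℝ) : StrictMono (mfB β) :=
  strictMono_of_deriv_pos (fun x => by rw [(hasDerivAt_mfB β x).deriv]; exact mfdB_pos β x)

lemma ZB_deriv_eq (β x : ℝ) : 2 * cB β * Real.sinh x = mfB β x * ZB β x := by
  rw [mfB_sinh]
  exact (div_mul_cancel₀ _ (ZB_pos β x).ne').symm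

lemma hasDerivAt_hhB (β K x : ℝ) :
    HasDerivAt (hhB β K) (mfdB β x * (x - 2 * β * K * mfB β x)) x := by
  have hmf := hasDerivAt_mfB β x
  have hZ := hasDerivAt_ZB β x
  have hZ0 := (ZB_pos β x).ne'
  have hlog : HasDerivAt (fun y => Real.log (ZB β y / 3)) (mfB β x) x := by
    have h := (hZ.div_const 3).log (by have := ZB_pos β x; positivity)
    convert h using 1
    rw [ZB_deriv_eq β x]
    field_simp
  have hfun : hhB β K = fun y => (id y * mfB β y - Real.log (ZB β y / 3)) - (β*K) * (mfB β y ^ 2) := by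
    funext y; unfold hhB; simp only [id_eq]
  rw [hfun]
  have h := (((hasDerivAt_id x).mul hmf).sub hlog).sub
    ((hasDerivAt_const x (β * K)).mul (hmf.pow 2))
  refine h.congr_deriv ?_
  simp only [id_eq]; ring

lemma hh_continuous (β K : ℝ) : Continuous (hhB β K) :=
  continuous_iff_continuousAt.2 fun x => (hasDerivAt_hhB β K x).differentiableAt.continuousAt

lemma Kc2_eq (β : ℝ) (hβ0 : 0 < β) : Kc2 β = (1 + 2 * cB β) / (4 * β * cB β) := by
  unfold Kc2 cB
  have := Real.exp_pos (-β)
  field_simp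
  ring

lemma qq_gt_Kc2 (β x : ℝ) (hβ0 : 0 < β) (hc4 : 1/4 ≤ cB β) (hx : 0 < x) :
    Kc2 β < qqB β x := by
  have hs := Real.sinh_pos_iff.mpr hx
  have hc := cB_pos β
  rw [Kc2_eq β hβ0]
  unfold qqB
  rw [div_lt_div_iff₀ (by positivity) (by positivity)]
  rw [ZB_cosh]
  have k1 : 0 < x * Real.cosh x - Real.sinh x := by linarith [H2 x hx]
  have k2 : 0 < 2*x + x * Real.cosh x - 3 * Real.sinh x := by linarith [H3 x hx]
  have k3 : 0 ≤ (2 * cB β - 1/2) * (x * Real.cosh x - Real.sinh x) :=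
    mul_nonneg (by linarith) k1.le
  have key : (1 + 2 * cB β) * Real.sinh x < x * (1 + 2 * cB β * Real.cosh x) := by
    nlinarith [k2, k3]
  nlinarith [mul_lt_mul_of_pos_right key (show (0:ℝ) < 4 * β * cB β by positivity)]

lemma eta_eq (β K x : ℝ) (hβ0 : 0 < β) (hx : 0 < x) :
    x - 2 * β * K * mfB β x = (4 * β * cB β * Real.sinh x / ZB β x) * (qqB β x - K) := by
  have hs := Real.sinh_pos_iff.mpr hx
  have hc := cB_pos β
  have hZ := ZB_pos β x
  rw [mfB_sinh]
  unfold qqB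
  field_simp
  ring

lemma eta_pos_of_le (β K x : ℝ) (hβ0 : 0 < β) (hc4 : 1/4 ≤ cB β)
    (hK : K ≤ Kc2 β) (hx : 0 < x) : 0 < x - 2 * β * K * mfB β x := by
  rw [eta_eq β K x hβ0 hx]
  have h1 := qq_gt_Kc2 β x hβ0 hc4 hx
  have hs := Real.sinh_pos_iff.mpr hx
  have hc := cB_pos β
  have hZ := ZB_pos β x
  apply mul_pos (by positivity)
  linarith

lemma qq_lt_bound (β x : ℝ) (hβ0 : 0 < β) (hx : 0 < x) :
    qqB β x < Kc2 β + (Real.cosh x - 1) / (2 * β) := by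
  have hs := Real.sinh_pos_iff.mpr hx
  have hc := cB_pos β
  have hZ := ZB_pos β x
  have key : qqB β x < ZB β x / (4 * β * cB β) := by
    unfold qqB
    rw [div_lt_div_iff₀ (by positivity) (by positivity)]
    have hxs := Real.self_lt_sinh_iff.mpr hx
    nlinarith [mul_pos (mul_pos hZ (show (0:ℝ) < 4 * β * cB β by positivity))
      (sub_pos.2 hxs)]
  have heq : ZB β x / (4 * β * cB β) = Kc2 β + (Real.cosh x - 1) / (2 * β) := by
    rw [Kc2_eq β hβ0, ZB_cosh]
    field_simp
    ring
  linarith [heq ▸ key]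

lemma qq_gt_half (β x : ℝ) (hβ0 : 0 < β) (hx : 0 < x) : x / (2 * β) < qqB β x := by
  have hs := Real.sinh_pos_iff.mpr hx
  have hc := cB_pos β
  unfold qqB
  rw [div_lt_div_iff₀ (by positivity) (by positivity), ZB_cosh]
  have h1 := Real.sinh_lt_cosh x
  have key : 2 * cB β * Real.sinh x < 1 + 2 * cB β * Real.cosh x := by nlinarith
  nlinarith [mul_lt_mul_of_pos_left key (show (0:ℝ) < 2 * β * x by positivity)]

lemma hasDerivAt_qqB (β x : ℝ) (hβ0 : 0 < β) (hx : 0 < x) :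
    HasDerivAt (qqB β)
      (((ZB β x + x * (2 * cB β * Real.sinh x)) * (4 * β * cB β * Real.sinh x)
        - x * ZB β x * (4 * β * cB β * Real.cosh x)) / (4 * β * cB β * Real.sinh x)^2) x := by
  have hs := (Real.sinh_pos_iff.mpr hx).ne'
  have hc := (cB_pos β).ne'
  have hn : HasDerivAt (fun y => y * ZB β y) (ZB β x + x * (2 * cB β * Real.sinh x)) x := by
    have h := (hasDerivAt_id x).mul (hasDerivAt_ZB β x)
    refine h.congr_deriv ?_; simp only [id_eq]; ring
  have hd : HasDerivAt (fun y => 4 * β * cB β * Real.sinh y) (4 * β * cB β * Real.cosh x) x :=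
    (Real.hasDerivAt_sinh x).const_mul _
  have hdne : 4 * β * cB β * Real.sinh x ≠ 0 := by
    have := cB_pos β
    have := Real.sinh_pos_iff.mpr hx
    positivity
  exact hn.div hd hdne

lemma qq_strictMonoOn (β : ℝ) (hβ0 : 0 < β) (hc4 : 1/4 ≤ cB β) :
    StrictMonoOn (qqB β) (Set.Ioi 0) := by
  apply strictMonoOn_of_deriv_pos (convex_Ioi 0)
  · intro y hy
    exact (hasDerivAt_qqB β y hβ0 hy).differentiableAt.continuousAt.continuousWithinAt
  · intro y hy
    rw [interior_Ioi] at hy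
    rw [(hasDerivAt_qqB β y hβ0 hy).deriv]
    have hs := Real.sinh_pos_iff.mpr hy
    have hc := cB_pos β
    apply div_pos _ (by positivity)
    have hcs := Real.cosh_sq_sub_sinh_sq y
    have hnum : (ZB β y + y * (2 * cB β * Real.sinh y)) * (4 * β * cB β * Real.sinh y)
        - y * ZB β y * (4 * β * cB β * Real.cosh y)
        = 4 * β * cB β * ((Real.sinh y - y * Real.cosh y)
          + 2 * cB β * (Real.sinh y * Real.cosh y - y)) := by
      rw [ZB_cosh]
      linear_combination (-8 * β * cB β ^ 2 * y) * hcs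
    rw [hnum]
    have h4 := H4 y hy
    have hsc := sinh_cosh_gt y hy
    have k3 : 0 ≤ (2 * cB β - 1/2) * (Real.sinh y * Real.cosh y - y) :=
      mul_nonneg (by linarith) (by linarith)
    apply mul_pos (by positivity)
    nlinarith [h4, k3]

lemma relEnt_split (a : ℝ) (ha : 0 ≤ a) :
    a * Real.log (3*a) = a * Real.log 3 + a * Real.log a := by
  rcases eq_or_lt_of_le ha with h | h
  · simp [← h]
  · rw [Real.log_mul (by norm_num) h.ne']; ring

lemma log_comp1 (β x : ℝ) :
    Real.log ((muB β x).1) = -β - x - Real.log (ZB β x) := by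
  unfold muB
  rw [Real.log_div (mul_pos (cB_pos β) (Real.exp_pos (-x))).ne' (ZB_pos β x).ne']
  rw [Real.log_mul (cB_pos β).ne' (Real.exp_pos (-x)).ne']
  unfold cB
  rw [Real.log_exp, Real.log_exp]
  ring

lemma log_comp2 (β x : ℝ) :
    Real.log ((muB β x).2.1) = -Real.log (ZB β x) := by
  unfold muB
  rw [Real.log_div one_ne_zero (ZB_pos β x).ne', Real.log_one]
  ring

lemma log_comp3 (β x : ℝ) :
    Real.log ((muB β x).2.2) = -β + x - Real.log (ZB β x) := by
  unfold muB
  rw [Real.log_div (mul_pos (cB_pos β) (Real.exp_pos x)).ne' (ZB_pos β x).ne']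
  rw [Real.log_mul (cB_pos β).ne' (Real.exp_pos x).ne']
  unfold cB
  rw [Real.log_exp, Real.log_exp]

lemma mu_pos (β x : ℝ) :
    0 < (muB β x).1 ∧ 0 < (muB β x).2.1 ∧ 0 < (muB β x).2.2 := by
  have hZ := ZB_pos β x
  have hc := cB_pos β
  have h1 := Real.exp_pos x
  have h2 := Real.exp_pos (-x)
  refine ⟨?_, ?_, ?_⟩ <;> · unfold muB; dsimp only; positivity

lemma gibbs_decomp (β K x : ℝ) (ν : ℝ × ℝ × ℝ) (hν : IsProbVec ν) :
    relEntUnif ν + β * fK K ν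
      - (x * (ν.2.2 - ν.1) - Real.log (ZB β x / 3) - β * K * (ν.2.2 - ν.1)^2)
    = (ν.1 * Real.log ν.1 - ν.1 * Real.log ((muB β x).1) - (ν.1 - (muB β x).1))
    + (ν.2.1 * Real.log ν.2.1 - ν.2.1 * Real.log ((muB β x).2.1) - (ν.2.1 - (muB β x).2.1))
    + (ν.2.2 * Real.log ν.2.2 - ν.2.2 * Real.log ((muB β x).2.2) - (ν.2.2 - (muB β x).2.2)) := by
  obtain ⟨ha, hb, hd, hsum⟩ := hν
  have hp := mu_sum β x
  unfold relEntUnif fK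
  rw [relEnt_split _ ha, relEnt_split _ hb, relEnt_split _ hd,
    log_comp1, log_comp2, log_comp3,
    Real.log_div (ZB_pos β x).ne' (by norm_num : (3:ℝ) ≠ 0)]
  linear_combination (Real.log 3 - Real.log (ZB β x) + 1) * hsum - hp

/-- the Gibbs variational lower bound -/
lemma gibbs_le (β K x : ℝ) (ν : ℝ × ℝ × ℝ) (hν : IsProbVec ν) :
    x * (ν.2.2 - ν.1) - Real.log (ZB β x / 3) - β * K * (ν.2.2 - ν.1)^2
      ≤ relEntUnif ν + β * fK K ν := by
  have hd := gibbs_decomp β K x ν hν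
  obtain ⟨hmp1, hmp2, hmp3⟩ := mu_pos β x
  have t1 := klterm_le ν.1 _ hν.1 hmp1
  have t2 := klterm_le ν.2.1 _ hν.2.1 hmp2
  have t3 := klterm_le ν.2.2 _ hν.2.2.1 hmp3
  linarith

lemma gibbs_eq (β K x : ℝ) (ν : ℝ × ℝ × ℝ) (hν : IsProbVec ν)
    (he : relEntUnif ν + β * fK K ν
      = x * (ν.2.2 - ν.1) - Real.log (ZB β x / 3) - β * K * (ν.2.2 - ν.1)^2) :
    ν = muB β x := by
  have hd := gibbs_decomp β K x ν hν
  obtain ⟨hmp1, hmp2, hmp3⟩ := mu_pos β x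
  have t1 := klterm_le ν.1 _ hν.1 hmp1
  have t2 := klterm_le ν.2.1 _ hν.2.1 hmp2
  have t3 := klterm_le ν.2.2 _ hν.2.2.1 hmp3
  have e1 : ν.1 * Real.log ν.1 - ν.1 * Real.log ((muB β x).1) = ν.1 - (muB β x).1 := by
    linarith
  have e2 : ν.2.1 * Real.log ν.2.1 - ν.2.1 * Real.log ((muB β x).2.1)
      = ν.2.1 - (muB β x).2.1 := by linarith
  have e3 : ν.2.2 * Real.log ν.2.2 - ν.2.2 * Real.log ((muB β x).2.2)
      = ν.2.2 - (muB β x).2.2 := by linarith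
  have q1 := klterm_eq _ _ hν.1 hmp1 e1
  have q2 := klterm_eq _ _ hν.2.1 hmp2 e2
  have q3 := klterm_eq _ _ hν.2.2.1 hmp3 e3
  exact Prod.ext q1 (Prod.ext q2 q3)

lemma GG_mu (β K x : ℝ) :
    relEntUnif (muB β x) + β * fK K (muB β x) = hhB β K x := by
  have hd := gibbs_decomp β K x (muB β x) (isProbVec_muB β x)
  simp only [sub_self, mul_zero, sub_zero] at hd
  rw [mfB_sub β x] at hd
  unfold hhB
  linarith [hd]

def xOf (β m : ℝ) : ℝ :=
  Real.log ((m + Real.sqrt (m^2 + 4*(cB β)^2*(1-m^2))) / (2*(cB β)*(1-m)))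

lemma mfB_xOf (β m : ℝ) (h1 : -1 < m) (h2 : m < 1) : mfB β (xOf β m) = m := by
  have hc := cB_pos β
  have h1m : (0:ℝ) < 1 - m := by linarith
  have h1p : (0:ℝ) < 1 + m := by linarith
  have hD : (0:ℝ) < m^2 + 4*(cB β)^2*(1-m^2) := by
    nlinarith [sq_nonneg m, mul_pos (pow_pos hc 2) (mul_pos h1m h1p)]
  set s := Real.sqrt (m^2 + 4*(cB β)^2*(1-m^2)) with hs_def
  have hs0 : 0 ≤ s := Real.sqrt_nonneg _
  have hs2 : s^2 = m^2 + 4*(cB β)^2*(1-m^2) := Real.sq_sqrt hD.le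
  have hspos : 0 < s := Real.sqrt_pos.mpr hD
  have hms : 0 < m + s := by
    rcases le_or_gt 0 m with hm | hm
    · linarith
    · have hsm : 0 < s - m := by linarith
      nlinarith [hs2, mul_pos (pow_pos hc 2) (mul_pos h1m h1p), hsm]
  set u := (m + s) / (2*(cB β)*(1-m)) with hu_def
  have hu : 0 < u := div_pos hms (by positivity)
  have hexp : Real.exp (xOf β m) = u := Real.exp_log hu
  have hexp' : Real.exp (-(xOf β m)) = u⁻¹ := by rw [Real.exp_neg, hexp]
  have quad : cB β * (1-m) * u^2 - m*u - cB β*(1+m) = 0 := by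
    rw [hu_def]
    field_simp
    nlinarith [hs2]
  unfold mfB ZB
  rw [hexp, hexp']
  have hZu : 0 < 1 + cB β * u + cB β * u⁻¹ := by positivity
  rw [div_eq_iff hZu.ne']
  field_simp
  nlinarith [quad, hu]

lemma boundary_plus (ν : ℝ × ℝ × ℝ) (hν : IsProbVec ν) (h1 : ν.2.2 - ν.1 = 1) :
    ν = (0, 0, 1) := by
  obtain ⟨ha, hb, hd, hsum⟩ := hν
  have : ν.1 = 0 ∧ ν.2.1 = 0 ∧ ν.2.2 = 1 := by
    refine ⟨by linarith, by linarith, by linarith⟩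
  exact Prod.ext this.1 (Prod.ext this.2.1 this.2.2)

lemma boundary_minus (ν : ℝ × ℝ × ℝ) (hν : IsProbVec ν) (h1 : ν.2.2 - ν.1 = -1) :
    ν = (1, 0, 0) := by
  obtain ⟨ha, hb, hd, hsum⟩ := hν
  have : ν.1 = 1 ∧ ν.2.1 = 0 ∧ ν.2.2 = 0 := by
    refine ⟨by linarith, by linarith, by linarith⟩
  exact Prod.ext this.1 (Prod.ext this.2.1 this.2.2)

lemma GG_boundary_plus (β K : ℝ) :
    relEntUnif (0,0,1) + β * fK K (0,0,1) = Real.log 3 + β * (1 - K) := by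
  unfold relEntUnif fK
  norm_num

lemma GG_boundary_minus (β K : ℝ) :
    relEntUnif (1,0,0) + β * fK K (1,0,0) = Real.log 3 + β * (1 - K) := by
  unfold relEntUnif fK
  norm_num

lemma isProbVec_plus : IsProbVec ((0:ℝ), (0:ℝ), (1:ℝ)) := by
  refine ⟨le_refl 0, le_refl 0, by norm_num, by norm_num⟩

lemma hh_lt_boundary (β K : ℝ) (hβ0 : 0 < β) (hK : 0 < K) :
    hhB β K (2*β*K) < Real.log 3 + β * (1 - K) := by
  set x₀ := 2*β*K with hx₀
  have hx0 : 0 < x₀ := by positivity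
  have hd := gibbs_decomp β K x₀ (0,0,1) isProbVec_plus
  obtain ⟨hmp1, hmp2, hmp3⟩ := mu_pos β x₀
  -- the first two terms of the decomposition are exactly the positive numbers p1, p2
  have t3 := klterm_le 1 ((muB β x₀).2.2) (by norm_num) hmp3
  simp only at hd
  rw [GG_boundary_plus β K] at hd
  have hl1 : Real.log 1 = 0 := Real.log_one
  have hbound : x₀ - Real.log (ZB β x₀ / 3) - β * K
      < Real.log 3 + β * (1 - K) := by
    norm_num at hd
    nlinarith [hd, t3, hmp1, hmp2, hl1]
  have hm1 := mfB_lt_one β x₀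
  have hm2 := neg_one_lt_mfB β x₀
  have hstep : hhB β K x₀ ≤ x₀ - Real.log (ZB β x₀ / 3) - β * K := by
    unfold hhB
    have hfac : 0 ≤ (1 - mfB β x₀) * (x₀ - β*K*(1 + mfB β x₀)) := by
      apply mul_nonneg (by linarith)
      rw [hx₀]
      nlinarith [mul_pos (mul_pos hβ0 hK) (sub_pos.2 hm1)]
    nlinarith [hfac]
  linarith

/-- The master lower bound: if `t` is a global minimizer of `hh`, every probability
vector has free energy at least `hh t`. -/
lemma GG_ge (β K : ℝ) (hβ0 : 0 < β) (hK : 0 < K) (t : ℝ)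
    (hmin : ∀ y, hhB β K t ≤ hhB β K y) (ν : ℝ × ℝ × ℝ) (hν : IsProbVec ν) :
    hhB β K t ≤ relEntUnif ν + β * fK K ν := by
  have hrange : -1 ≤ ν.2.2 - ν.1 ∧ ν.2.2 - ν.1 ≤ 1 := by
    obtain ⟨ha, hb, hd, hsum⟩ := hν
    constructor <;> nlinarith
  rcases eq_or_lt_of_le hrange.2 with h1 | h1
  · -- boundary m = 1
    rw [boundary_plus ν hν h1, GG_boundary_plus]
    linarith [hh_lt_boundary β K hβ0 hK, hmin (2*β*K)]
  rcases eq_or_lt_of_le hrange.1 with h2 | h2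
  · rw [boundary_minus ν hν h2.symm, GG_boundary_minus]
    linarith [hh_lt_boundary β K hβ0 hK, hmin (2*β*K)]
  · -- interior
    set y := xOf β (ν.2.2 - ν.1) with hy
    have hmf : mfB β y = ν.2.2 - ν.1 := mfB_xOf β _ h2 h1
    have hb := gibbs_le β K y ν hν
    have : hhB β K y = y * (ν.2.2 - ν.1) - Real.log (ZB β y / 3)
        - β * K * (ν.2.2 - ν.1)^2 := by
      unfold hhB; rw [hmf]
    linarith [hmin y]

/-- Equality case: any canonical minimiser is of the form `muB β y` for `y` a
minimiser of `hh`. -/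
lemma GG_eq_case (β K : ℝ) (hβ0 : 0 < β) (hK : 0 < K) (t : ℝ)
    (hmin : ∀ y, hhB β K t ≤ hhB β K y) (ν : ℝ × ℝ × ℝ) (hν : IsProbVec ν)
    (hle : relEntUnif ν + β * fK K ν ≤ hhB β K t) :
    ∃ y, ν = muB β y ∧ hhB β K y = hhB β K t := by
  have hrange : -1 ≤ ν.2.2 - ν.1 ∧ ν.2.2 - ν.1 ≤ 1 := by
    obtain ⟨ha, hb, hd, hsum⟩ := hν
    constructor <;> nlinarith
  rcases eq_or_lt_of_le hrange.2 with h1 | h1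
  · exfalso
    have := hh_lt_boundary β K hβ0 hK
    have h3 := hmin (2*β*K)
    rw [boundary_plus ν hν h1, GG_boundary_plus] at hle
    linarith
  rcases eq_or_lt_of_le hrange.1 with h2 | h2
  · exfalso
    have := hh_lt_boundary β K hβ0 hK
    have h3 := hmin (2*β*K)
    rw [boundary_minus ν hν h2.symm, GG_boundary_minus] at hle
    linarith
  · set y := xOf β (ν.2.2 - ν.1) with hy
    have hmf : mfB β y = ν.2.2 - ν.1 := mfB_xOf β _ h2 h1
    have hhy : hhB β K y = y * (ν.2.2 - ν.1) - Real.log (ZB β y / 3)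
        - β * K * (ν.2.2 - ν.1)^2 := by
      unfold hhB; rw [hmf]
    have hb := gibbs_le β K y ν hν
    have heq : relEntUnif ν + β * fK K ν
        = y * (ν.2.2 - ν.1) - Real.log (ZB β y / 3) - β * K * (ν.2.2 - ν.1)^2 := by
      linarith [hmin y]
    refine ⟨y, gibbs_eq β K y ν hν heq, ?_⟩
    have := hmin y
    linarith

lemma hh_strictMonoOn_Ici (β K : ℝ) (hβ0 : 0 < β) (hc4 : 1/4 ≤ cB β)
    (hK : K ≤ Kc2 β) : StrictMonoOn (hhB β K) (Set.Ici 0) := by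
  apply strictMonoOn_of_deriv_pos (convex_Ici 0)
  · exact (hh_continuous β K).continuousOn
  · intro y hy
    rw [interior_Ici] at hy
    rw [(hasDerivAt_hhB β K y).deriv]
    exact mul_pos (mfdB_pos β y) (eta_pos_of_le β K y hβ0 hc4 hK hy)

lemma hh_min_le (β K : ℝ) (hβ0 : 0 < β) (hc4 : 1/4 ≤ cB β)
    (hK : K ≤ Kc2 β) : ∀ y, hhB β K 0 ≤ hhB β K y := by
  intro y
  rcases lt_trichotomy y 0 with h | h | h
  · have := hh_strictMonoOn_Ici β K hβ0 hc4 hK (Set.mem_Ici.2 le_rfl)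
      (Set.mem_Ici.2 (by linarith : (0:ℝ) ≤ -y)) (by linarith)
    rw [hhB_even] at this
    linarith
  · rw [h]
  · exact (hh_strictMonoOn_Ici β K hβ0 hc4 hK (Set.mem_Ici.2 le_rfl)
      (Set.mem_Ici.2 h.le) h).le

lemma hh_min_eq (β K : ℝ) (hβ0 : 0 < β) (hc4 : 1/4 ≤ cB β)
    (hK : K ≤ Kc2 β) (y : ℝ) (he : hhB β K y = hhB β K 0) : y = 0 := by
  rcases lt_trichotomy y 0 with h | h | h
  · exfalso
    have := hh_strictMonoOn_Ici β K hβ0 hc4 hK (Set.mem_Ici.2 le_rfl)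
      (Set.mem_Ici.2 (by linarith : (0:ℝ) ≤ -y)) (by linarith)
    rw [hhB_even, he] at this
    exact lt_irrefl _ this
  · exact h
  · exfalso
    have := hh_strictMonoOn_Ici β K hβ0 hc4 hK (Set.mem_Ici.2 le_rfl)
      (Set.mem_Ici.2 h.le) h
    rw [he] at this
    exact lt_irrefl _ this

/-- existence of the positive critical point for `K > Kc2` -/
lemma exists_root (β K : ℝ) (hβ0 : 0 < β) (hc4 : 1/4 ≤ cB β) (hKc : Kc2 β < K) :
    ∃ t, 0 < t ∧ qqB β t = K := by
  -- small point where qq < K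
  have hcosh : ContinuousAt Real.cosh 0 := Real.continuous_cosh.continuousAt
  rw [Metric.continuousAt_iff] at hcosh
  obtain ⟨δ, hδ0, hδ⟩ := hcosh (2*β*(K - Kc2 β))
    (by have : 0 < K - Kc2 β := by linarith
        positivity)
  set a := min (δ/2) 1 with ha_def
  have ha0 : 0 < a := by positivity
  have haδ : dist a 0 < δ := by
    rw [Real.dist_eq, sub_zero, abs_of_pos ha0]
    have : a ≤ δ/2 := min_le_left _ _
    linarith
  have hax := hδ haδ
  rw [Real.dist_eq, Real.cosh_zero] at hax
  have hca : Real.cosh a - 1 < 2*β*(K - Kc2 β) := by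
    have := abs_lt.1 hax
    linarith [this.2]
  have hqa : qqB β a < K := by
    have := qq_lt_bound β a hβ0 ha0
    have h2 : (Real.cosh a - 1)/(2*β) < K - Kc2 β := by
      rw [div_lt_iff₀ (by positivity)]
      linarith
    linarith
  -- large point where qq > K
  set b := max (a+1) (2*β*K) with hb_def
  have hab : a < b := lt_of_lt_of_le (by linarith) (le_max_left _ _)
  have hb0 : 0 < b := lt_trans ha0 hab
  have hqb : K < qqB β b := by
    have h1 := qq_gt_half β b hβ0 hb0
    have h2 : 2*β*K ≤ b := le_max_right _ _
    have : K ≤ b/(2*β) := by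
      rw [le_div_iff₀ (by positivity)]
      linarith
    linarith
  have hcont : ContinuousOn (qqB β) (Set.Icc a b) := by
    intro y hy
    exact (hasDerivAt_qqB β y hβ0 (lt_of_lt_of_le ha0 hy.1)).differentiableAt.continuousAt.continuousWithinAt
  have hIvt := intermediate_value_Ioo hab.le hcont
  have hK_mem : K ∈ Set.Ioo (qqB β a) (qqB β b) := ⟨hqa, hqb⟩
  obtain ⟨t, ht, hqt⟩ := hIvt hK_mem
  exact ⟨t, lt_trans ha0 ht.1, hqt⟩

open Classical in
def xplus (β K : ℝ) : ℝ :=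
  if h : ∃ t, 0 < t ∧ qqB β t = K then Classical.choose h else 0

lemma xplus_spec (β K : ℝ) (hβ0 : 0 < β) (hc4 : 1/4 ≤ cB β) (hKc : Kc2 β < K) :
    0 < xplus β K ∧ qqB β (xplus β K) = K := by
  have h := exists_root β K hβ0 hc4 hKc
  unfold xplus
  rw [dif_pos h]
  exact Classical.choose_spec h

lemma xplus_unique (β K : ℝ) (hβ0 : 0 < β) (hc4 : 1/4 ≤ cB β) (hKc : Kc2 β < K)
    (t : ℝ) (ht : 0 < t) (hqt : qqB β t = K) : t = xplus β K := by
  obtain ⟨hp, hq⟩ := xplus_spec β K hβ0 hc4 hKc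
  exact (qq_strictMonoOn β hβ0 hc4).injOn (Set.mem_Ioi.2 ht) (Set.mem_Ioi.2 hp)
    (by rw [hqt, hq])

lemma hh_anti_mono (β K : ℝ) (hβ0 : 0 < β) (hc4 : 1/4 ≤ cB β) (hKc : Kc2 β < K) :
    StrictAntiOn (hhB β K) (Set.Icc 0 (xplus β K)) ∧
    StrictMonoOn (hhB β K) (Set.Ici (xplus β K)) := by
  obtain ⟨htp, htq⟩ := xplus_spec β K hβ0 hc4 hKc
  set t := xplus β K
  constructor
  · apply strictAntiOn_of_deriv_neg (convex_Icc 0 t)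
    · exact (hh_continuous β K).continuousOn
    · intro y hy
      rw [interior_Icc] at hy
      rw [(hasDerivAt_hhB β K y).deriv]
      apply mul_neg_of_pos_of_neg (mfdB_pos β y)
      rw [eta_eq β K y hβ0 hy.1]
      apply mul_neg_of_pos_of_neg
      · have hs := Real.sinh_pos_iff.mpr hy.1
        have hc := cB_pos β
        have hZ := ZB_pos β y
        positivity
      · have := qq_strictMonoOn β hβ0 hc4 (Set.mem_Ioi.2 hy.1) (Set.mem_Ioi.2 htp) hy.2
        rw [htq] at this
        linarith
  · apply strictMonoOn_of_deriv_pos (convex_Ici t)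
    · exact (hh_continuous β K).continuousOn
    · intro y hy
      rw [interior_Ici] at hy
      have hy0 : 0 < y := lt_trans htp hy
      rw [(hasDerivAt_hhB β K y).deriv]
      apply mul_pos (mfdB_pos β y)
      rw [eta_eq β K y hβ0 hy0]
      apply mul_pos
      · have hs := Real.sinh_pos_iff.mpr hy0
        have hc := cB_pos β
        have hZ := ZB_pos β y
        positivity
      · have := qq_strictMonoOn β hβ0 hc4 (Set.mem_Ioi.2 htp) (Set.mem_Ioi.2 hy0) hy
        rw [htq] at this
        linarith

lemma hh_min_le' (β K : ℝ) (hβ0 : 0 < β) (hc4 : 1/4 ≤ cB β) (hKc : Kc2 β < K) :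
    ∀ y, hhB β K (xplus β K) ≤ hhB β K y := by
  obtain ⟨hanti, hmono⟩ := hh_anti_mono β K hβ0 hc4 hKc
  obtain ⟨htp, htq⟩ := xplus_spec β K hβ0 hc4 hKc
  set t := xplus β K
  have key : ∀ y, 0 ≤ y → hhB β K t ≤ hhB β K y := by
    intro y hy
    rcases le_or_gt y t with h | h
    · rcases eq_or_lt_of_le h with h' | h'
      · rw [h']
      · exact (hanti ⟨hy, h⟩ ⟨htp.le, le_rfl⟩ h').le
    · exact (hmono (Set.mem_Ici.2 le_rfl) (Set.mem_Ici.2 h.le) h).le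
  intro y
  rcases le_or_gt 0 y with h | h
  · exact key y h
  · have := key (-y) (by linarith)
    rwa [hhB_even] at this

lemma hh_min_eq' (β K : ℝ) (hβ0 : 0 < β) (hc4 : 1/4 ≤ cB β) (hKc : Kc2 β < K)
    (y : ℝ) (he : hhB β K y = hhB β K (xplus β K)) : y = xplus β K ∨ y = -(xplus β K) := by
  obtain ⟨hanti, hmono⟩ := hh_anti_mono β K hβ0 hc4 hKc
  obtain ⟨htp, htq⟩ := xplus_spec β K hβ0 hc4 hKc
  set t := xplus β K
  have key : ∀ z, 0 ≤ z → hhB β K z = hhB β K t → z = t := by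
    intro z hz hze
    rcases lt_trichotomy z t with h | h | h
    · exfalso
      have := hanti ⟨hz, h.le⟩ ⟨htp.le, le_rfl⟩ h
      rw [hze] at this
      exact lt_irrefl _ this
    · exact h
    · exfalso
      have := hmono (Set.mem_Ici.2 le_rfl) (Set.mem_Ici.2 h.le) h
      rw [hze] at this
      exact lt_irrefl _ this
  rcases le_or_gt 0 y with h | h
  · exact Or.inl (key y h he)
  · right
    have h2 : hhB β K (-y) = hhB β K t := by rw [hhB_even]; exact he
    have := key (-y) (by linarith) h2
    linarith

lemma Kc2_pos (β : ℝ) (hβ0 : 0 < β) : 0 < Kc2 β := by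
  unfold Kc2
  have := Real.exp_pos (-β)
  positivity

lemma canonE_eq_a (β K : ℝ) (hβ0 : 0 < β) (hc4 : 1/4 ≤ cB β)
    (hK0 : 0 < K) (hK : K ≤ Kc2 β) : canonE β K = {rhoBeta β} := by
  ext ν
  simp only [Set.mem_singleton_iff]
  constructor
  · rintro ⟨hpv, hminν⟩
    have hle : relEntUnif ν + β * fK K ν ≤ hhB β K 0 := by
      have := hminν (muB β 0) (isProbVec_muB β 0)
      rw [GG_mu] at this
      exact this
    obtain ⟨y, hνy, hhy⟩ := GG_eq_case β K hβ0 hK0 0 (hh_min_le β K hβ0 hc4 hK) ν hpv hle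
    rw [hh_min_eq β K hβ0 hc4 hK y hhy] at hνy
    rw [hνy, muB_zero]
  · rintro rfl
    rw [← muB_zero β]
    refine ⟨isProbVec_muB β 0, ?_⟩
    intro ν' hν'
    rw [GG_mu]
    exact GG_ge β K hβ0 hK0 0 (hh_min_le β K hβ0 hc4 hK) ν' hν'

lemma canonE_eq_b (β K : ℝ) (hβ0 : 0 < β) (hc4 : 1/4 ≤ cB β) (hKc : Kc2 β < K) :
    canonE β K = {muB β (xplus β K), muB β (-(xplus β K))} := by
  have hK0 : 0 < K := lt_trans (Kc2_pos β hβ0) hKc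
  have hmin := hh_min_le' β K hβ0 hc4 hKc
  ext ν
  simp only [Set.mem_insert_iff, Set.mem_singleton_iff]
  constructor
  · rintro ⟨hpv, hminν⟩
    have hle : relEntUnif ν + β * fK K ν ≤ hhB β K (xplus β K) := by
      have := hminν (muB β (xplus β K)) (isProbVec_muB β _)
      rw [GG_mu] at this
      exact this
    obtain ⟨y, hνy, hhy⟩ := GG_eq_case β K hβ0 hK0 _ hmin ν hpv hle
    rcases hh_min_eq' β K hβ0 hc4 hKc y hhy with h | h
    · left; rw [hνy, h]
    · right; rw [hνy, h]
  · rintro (rfl | rfl)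
    · refine ⟨isProbVec_muB β _, ?_⟩
      intro ν' hν'
      rw [GG_mu]
      exact GG_ge β K hβ0 hK0 _ hmin ν' hν'
    · refine ⟨isProbVec_muB β _, ?_⟩
      intro ν' hν'
      rw [GG_mu, hhB_even]
      exact GG_ge β K hβ0 hK0 _ hmin ν' hν'

lemma muB_neg_comp (β t : ℝ) :
    muB β (-t) = ((muB β t).2.2, (muB β t).2.1, (muB β t).1) := by
  unfold muB
  rw [neg_neg, ZB_even]

lemma muB_continuous (β : ℝ) : Continuous (muB β) := by
  have hZne : ∀ x, ZB β x ≠ 0 := fun x => (ZB_pos β x).ne'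
  have hZc : Continuous (ZB β) := by
    unfold ZB
    continuity
  unfold muB
  refine Continuous.prodMk ?_ (Continuous.prodMk ?_ ?_)
  · exact (continuous_const.mul (Real.continuous_exp.comp continuous_neg)).div hZc hZne
  · exact continuous_const.div hZc hZne
  · exact (continuous_const.mul Real.continuous_exp).div hZc hZne

lemma mfB_pos_of_pos (β t : ℝ) (ht : 0 < t) : 0 < mfB β t := by
  have := mfB_strictMono β ht
  rwa [mfB_zero] at this

lemma xplus_continuousAt (β K₀ : ℝ) (hβ0 : 0 < β) (hc4 : 1/4 ≤ cB β)
    (hK₀ : Kc2 β < K₀) : ContinuousAt (xplus β) K₀ := by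
  rw [Metric.continuousAt_iff]
  intro ε hε
  obtain ⟨hx₀, hq₀⟩ := xplus_spec β K₀ hβ0 hc4 hK₀
  set x₀ := xplus β K₀ with hx₀def
  set ε' := min (ε/2) (x₀/2) with hε'def
  have hε' : 0 < ε' := by positivity
  have hε'x : ε' ≤ x₀/2 := min_le_right _ _
  have hε'ε : ε' ≤ ε/2 := min_le_left _ _
  have hl0 : 0 < x₀ - ε' := by linarith
  have hql : qqB β (x₀ - ε') < K₀ := by
    have := qq_strictMonoOn β hβ0 hc4 (Set.mem_Ioi.2 hl0) (Set.mem_Ioi.2 hx₀) (by linarith)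
    rwa [hq₀] at this
  have hqr : K₀ < qqB β (x₀ + ε') := by
    have h := qq_strictMonoOn β hβ0 hc4 (Set.mem_Ioi.2 hx₀)
      (Set.mem_Ioi.2 (show (0:ℝ) < x₀ + ε' by linarith)) (show x₀ < x₀ + ε' by linarith)
    rwa [hq₀] at h
  have hql2 : Kc2 β < qqB β (x₀ - ε') := qq_gt_Kc2 β _ hβ0 hc4 hl0
  have hδpos : 0 < min (K₀ - qqB β (x₀ - ε')) (qqB β (x₀ + ε') - K₀) :=
    lt_min (by linarith) (by linarith)
  refine ⟨min (K₀ - qqB β (x₀ - ε')) (qqB β (x₀ + ε') - K₀), hδpos, ?_⟩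
  intro K hK
  rw [Real.dist_eq] at hK
  have hK1 := abs_lt.1 hK
  have hKl : qqB β (x₀ - ε') < K := by
    have := min_le_left (K₀ - qqB β (x₀ - ε')) (qqB β (x₀ + ε') - K₀)
    linarith [hK1.1]
  have hKr : K < qqB β (x₀ + ε') := by
    have := min_le_right (K₀ - qqB β (x₀ - ε')) (qqB β (x₀ + ε') - K₀)
    linarith [hK1.2]
  have hKc2 : Kc2 β < K := lt_trans hql2 hKl
  obtain ⟨hxp, hqx⟩ := xplus_spec β K hβ0 hc4 hKc2
  set x := xplus β K with hxdef
  have hxgt : x₀ - ε' < x := by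
    by_contra h
    push_neg at h
    rcases eq_or_lt_of_le h with h' | h'
    · rw [h'] at hqx; linarith
    · have := qq_strictMonoOn β hβ0 hc4 (Set.mem_Ioi.2 hxp) (Set.mem_Ioi.2 hl0) h'
      rw [hqx] at this
      linarith
  have hxlt : x < x₀ + ε' := by
    by_contra h
    push_neg at h
    rcases eq_or_lt_of_le h with h' | h'
    · rw [← h'] at hqx; linarith
    · have := qq_strictMonoOn β hβ0 hc4 (Set.mem_Ioi.2 (by linarith : (0:ℝ) < x₀ + ε'))
        (Set.mem_Ioi.2 hxp) h'
      rw [hqx] at this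
      linarith
  rw [Real.dist_eq, abs_lt]
  constructor <;> linarith

lemma xplus_tendsto (β : ℝ) (hβ0 : 0 < β) (hc4 : 1/4 ≤ cB β) :
    Filter.Tendsto (xplus β) (nhdsWithin (Kc2 β) (Set.Ioi (Kc2 β))) (nhds 0) := by
  rw [Metric.tendsto_nhdsWithin_nhds]
  intro ε hε
  set a := min (ε/2) 1 with ha_def
  have ha0 : 0 < a := by positivity
  have haε : a ≤ ε/2 := min_le_left _ _
  have hqa : Kc2 β < qqB β a := qq_gt_Kc2 β a hβ0 hc4 ha0
  refine ⟨qqB β a - Kc2 β, by linarith, ?_⟩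
  intro K hKmem hKd
  rw [Real.dist_eq] at hKd
  have hK1 := abs_lt.1 hKd
  have hKc : Kc2 β < K := hKmem
  have hKlt : K < qqB β a := by linarith [hK1.2]
  obtain ⟨hxp, hqx⟩ := xplus_spec β K hβ0 hc4 hKc
  have hxa : xplus β K < a := by
    by_contra h
    push_neg at h
    rcases eq_or_lt_of_le h with h' | h'
    · rw [← h'] at hqx; linarith
    · have := qq_strictMonoOn β hβ0 hc4 (Set.mem_Ioi.2 ha0) (Set.mem_Ioi.2 hxp) h'
      rw [hqx] at this
      linarith
  rw [Real.dist_eq, sub_zero, abs_of_pos hxp]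
  linarith
end BCaux

theorem canonE_structure_second_order (β : ℝ) (hβ0 : 0 < β) (hβ : β ≤ Real.log 4) :
    (∀ K : ℝ, 0 < K → K ≤ Kc2 β → canonE β K = {rhoBeta β}) ∧
    ∃ νp νm : ℝ → ℝ × ℝ × ℝ,
      (∀ K : ℝ, Kc2 β < K →
        νp K ≠ νm K ∧ νp K ≠ rhoBeta β ∧ νm K ≠ rhoBeta β ∧
        canonE β K = {νp K, νm K} ∧
        (νm K).1 = (νp K).2.2 ∧ (νm K).2.1 = (νp K).2.1 ∧ (νm K).2.2 = (νp K).1) ∧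
      ContinuousOn νp (Set.Ioi (Kc2 β)) ∧ ContinuousOn νm (Set.Ioi (Kc2 β)) ∧
      Filter.Tendsto νp (nhdsWithin (Kc2 β) (Set.Ioi (Kc2 β))) (nhds (rhoBeta β)) ∧
      Filter.Tendsto νm (nhdsWithin (Kc2 β) (Set.Ioi (Kc2 β))) (nhds (rhoBeta β)) := by
  have hc4 := BCaux.cB_ge β hβ
  constructor
  · intro K hK0 hK
    exact BCaux.canonE_eq_a β K hβ0 hc4 hK0 hK
  · refine ⟨fun K => BCaux.muB β (BCaux.xplus β K),
      fun K => BCaux.muB β (-(BCaux.xplus β K)), ?_, ?_, ?_, ?_, ?_⟩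
    · intro K hKc
      obtain ⟨htp, htq⟩ := BCaux.xplus_spec β K hβ0 hc4 hKc
      set t := BCaux.xplus β K with ht_def
      have hmft : 0 < BCaux.mfB β t := BCaux.mfB_pos_of_pos β t htp
      have hswap := BCaux.muB_neg_comp β t
      refine ⟨?_, ?_, ?_, BCaux.canonE_eq_b β K hβ0 hc4 hKc, ?_, ?_, ?_⟩
      · intro h
        have h2 := congrArg (fun ν : ℝ×ℝ×ℝ => ν.2.2 - ν.1) h
        simp only at h2
        rw [BCaux.mfB_sub, BCaux.mfB_sub, BCaux.mfB_odd] at h2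
        linarith
      · intro h
        rw [← BCaux.muB_zero β] at h
        have h2 := congrArg (fun ν : ℝ×ℝ×ℝ => ν.2.2 - ν.1) h
        simp only at h2
        rw [BCaux.mfB_sub, BCaux.mfB_sub, BCaux.mfB_zero] at h2
        linarith
      · intro h
        rw [← BCaux.muB_zero β] at h
        have h2 := congrArg (fun ν : ℝ×ℝ×ℝ => ν.2.2 - ν.1) h
        simp only at h2
        rw [BCaux.mfB_sub, BCaux.mfB_sub, BCaux.mfB_odd, BCaux.mfB_zero] at h2
        linarith
      · show (BCaux.muB β (-(BCaux.xplus β K))).1 = (BCaux.muB β (BCaux.xplus β K)).2.2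
        rw [BCaux.muB_neg_comp β (BCaux.xplus β K)]
      · show (BCaux.muB β (-(BCaux.xplus β K))).2.1 = (BCaux.muB β (BCaux.xplus β K)).2.1
        rw [BCaux.muB_neg_comp β (BCaux.xplus β K)]
      · show (BCaux.muB β (-(BCaux.xplus β K))).2.2 = (BCaux.muB β (BCaux.xplus β K)).1
        rw [BCaux.muB_neg_comp β (BCaux.xplus β K)]
    · intro K₀ hK₀
      exact (((BCaux.muB_continuous β).continuousAt).comp
        (BCaux.xplus_continuousAt β K₀ hβ0 hc4 hK₀)).continuousWithinAt
    · intro K₀ hK₀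
      exact (((BCaux.muB_continuous β).continuousAt).comp
        ((BCaux.xplus_continuousAt β K₀ hβ0 hc4 hK₀).neg)).continuousWithinAt
    · have h1 := BCaux.xplus_tendsto β hβ0 hc4
      have h2 : Filter.Tendsto (BCaux.muB β) (nhds 0) (nhds (rhoBeta β)) := by
        rw [← BCaux.muB_zero β]
        exact (BCaux.muB_continuous β).continuousAt
      exact h2.comp h1
    · have h1 := (BCaux.xplus_tendsto β hβ0 hc4).neg
      rw [neg_zero] at h1
      have h2 : Filter.Tendsto (BCaux.muB β) (nhds 0) (nhds (rhoBeta β)) := by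
        rw [← BCaux.muB_zero β]
        exact (BCaux.muB_continuous β).continuousAt
      exact h2.comp h1
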